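/- Issue I5 occurs: there exist m : ℕ, a non-constant boolean classifier κ : (Fin m → Bool) → Bool, a point v : Fin m → Bool, and a feature i ∈ Fin m such that i is irrelevant and yet |Sv(j)| < |Sv(i)| for every feature j ≠ i, i.e., the irrelevant feature has strictly the largest Shapley value in absolute value. -/

import Mathlib

open scoped Classical

/-- `phi κ v S` is the average value of the boolean classifier `κ` (with
`true ↦ 1`, `false ↦ 0`) over all points agreeing with `v` on the features in `S`. -/
noncomputable def phi {m : ℕ} (κ : (Fin m → Bool) → Bool) (v : Fin m → Bool)
    (S : Finset (Fin m)) : ℝ :=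
  (1 / 2 ^ (m - S.card)) *
    ∑ x ∈ Finset.univ.filter (fun x : Fin m → Bool => ∀ i ∈ S, x i = v i),
      (if κ x then (1 : ℝ) else 0)

/-- The Shapley value of feature `i` for the classifier `κ` at the point `v`. -/
noncomputable def Sv {m : ℕ} (κ : (Fin m → Bool) → Bool) (v : Fin m → Bool)
    (i : Fin m) : ℝ :=
  ∑ S ∈ (Finset.univ.erase i).powerset,
    ((Nat.factorial S.card * Nat.factorial (m - S.card - 1) : ℝ) / Nat.factorial m) *
      (phi κ v (insert i S) - phi κ v S)

/-- `WAXp κ v X` holds iff fixing the features of `X` to the values of `v`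
suffices for the prediction `κ v`. -/
def WAXp {m : ℕ} (κ : (Fin m → Bool) → Bool) (v : Fin m → Bool)
    (X : Finset (Fin m)) : Prop :=
  ∀ x : Fin m → Bool, (∀ i ∈ X, x i = v i) → κ x = κ v

/-- `X` is an AXp iff it is a subset-minimal weak AXp. -/
def AXp {m : ℕ} (κ : (Fin m → Bool) → Bool) (v : Fin m → Bool)
    (X : Finset (Fin m)) : Prop :=
  WAXp κ v X ∧ ∀ X' ⊂ X, ¬ WAXp κ v X'

/-- Feature `i` is relevant iff it belongs to some AXp. -/
def Relevant {m : ℕ} (κ : (Fin m → Bool) → Bool) (v : Fin m → Bool) (i : Fin m) : Prop :=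
  ∃ X : Finset (Fin m), AXp κ v X ∧ i ∈ X

/-- Feature `i` is irrelevant iff it belongs to no AXp. -/
def Irrelevant {m : ℕ} (κ : (Fin m → Bool) → Bool) (v : Fin m → Bool) (i : Fin m) : Prop :=
  ¬ Relevant κ v i

def myκ : (Fin 4 → Bool) → Bool := fun x =>
  ((x 0 && !x 1 && !x 2) || (!x 0 && x 1 && !x 2) || (!x 0 && !x 1 && x 2)) && !x 3

def v0 : Fin 4 → Bool := fun _ => false

lemma phi_eq (S : Finset (Fin 4)) :
    phi myκ v0 S =
      ((Finset.univ.filter (fun x : Fin 4 → Bool =>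
        (∀ i ∈ S, x i = false) ∧ myκ x = true)).card : ℝ) / 2 ^ (4 - S.card) := by
  rw [phi, Finset.sum_boole, Finset.filter_filter]
  simp only [v0]
  ring_nf
  congr

lemma phi_val (S : Finset (Fin 4)) (c k : ℕ)
    (hc : (Finset.univ.filter (fun x : Fin 4 → Bool =>
        (∀ i ∈ S, x i = false) ∧ myκ x = true)).card = c)
    (hk : S.card = k) :
    phi myκ v0 S = c / 2 ^ (4 - k) := by
  rw [phi_eq, hc, hk]

lemma sv0 : Sv myκ v0 0 = (-23/192 : ℝ) := by
  rw [Sv, show ((Finset.univ.erase (0:Fin 4)).powerset : Finset (Finset (Fin 4))) = {∅, {1}, {2}, {3}, {1,2}, {1,3}, {2,3}, {1,2,3}} from by decide]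
  rw [Finset.sum_insert (by decide), Finset.sum_insert (by decide), Finset.sum_insert (by decide), Finset.sum_insert (by decide), Finset.sum_insert (by decide), Finset.sum_insert (by decide), Finset.sum_insert (by decide), Finset.sum_singleton]
  rw [phi_val (insert 0 (∅ : Finset (Fin 4))) 2 1 (by decide) (by decide),
    phi_val (∅ : Finset (Fin 4)) 3 0 (by decide) (by decide),
    phi_val (insert 0 ({1} : Finset (Fin 4))) 1 2 (by decide) (by decide),
    phi_val ({1} : Finset (Fin 4)) 2 1 (by decide) (by decide),
    phi_val (insert 0 ({2} : Finset (Fin 4))) 1 2 (by decide) (by decide),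
    phi_val ({2} : Finset (Fin 4)) 2 1 (by decide) (by decide),
    phi_val (insert 0 ({3} : Finset (Fin 4))) 2 2 (by decide) (by decide),
    phi_val ({3} : Finset (Fin 4)) 3 1 (by decide) (by decide),
    phi_val (insert 0 ({1,2} : Finset (Fin 4))) 0 3 (by decide) (by decide),
    phi_val ({1,2} : Finset (Fin 4)) 1 2 (by decide) (by decide),
    phi_val (insert 0 ({1,3} : Finset (Fin 4))) 1 3 (by decide) (by decide),
    phi_val ({1,3} : Finset (Fin 4)) 2 2 (by decide) (by decide),
    phi_val (insert 0 ({2,3} : Finset (Fin 4))) 1 3 (by decide) (by decide),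
    phi_val ({2,3} : Finset (Fin 4)) 2 2 (by decide) (by decide),
    phi_val (insert 0 ({1,2,3} : Finset (Fin 4))) 0 4 (by decide) (by decide),
    phi_val ({1,2,3} : Finset (Fin 4)) 1 3 (by decide) (by decide)]
  norm_num [Nat.factorial, show (({1} : Finset (Fin 4))).card = 1 from by decide, show (({2} : Finset (Fin 4))).card = 1 from by decide, show (({3} : Finset (Fin 4))).card = 1 from by decide, show (({1,2} : Finset (Fin 4))).card = 2 from by decide, show (({1,3} : Finset (Fin 4))).card = 2 from by decide, show (({2,3} : Finset (Fin 4))).card = 2 from by decide, show (({1,2,3} : Finset (Fin 4))).card = 3 from by decide]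

lemma sv1 : Sv myκ v0 1 = (-23/192 : ℝ) := by
  rw [Sv, show ((Finset.univ.erase (1:Fin 4)).powerset : Finset (Finset (Fin 4))) = {∅, {0}, {2}, {3}, {0,2}, {0,3}, {2,3}, {0,2,3}} from by decide]
  rw [Finset.sum_insert (by decide), Finset.sum_insert (by decide), Finset.sum_insert (by decide), Finset.sum_insert (by decide), Finset.sum_insert (by decide), Finset.sum_insert (by decide), Finset.sum_insert (by decide), Finset.sum_singleton]
  rw [phi_val (insert 1 (∅ : Finset (Fin 4))) 2 1 (by decide) (by decide),
    phi_val (∅ : Finset (Fin 4)) 3 0 (by decide) (by decide),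
    phi_val (insert 1 ({0} : Finset (Fin 4))) 1 2 (by decide) (by decide),
    phi_val ({0} : Finset (Fin 4)) 2 1 (by decide) (by decide),
    phi_val (insert 1 ({2} : Finset (Fin 4))) 1 2 (by decide) (by decide),
    phi_val ({2} : Finset (Fin 4)) 2 1 (by decide) (by decide),
    phi_val (insert 1 ({3} : Finset (Fin 4))) 2 2 (by decide) (by decide),
    phi_val ({3} : Finset (Fin 4)) 3 1 (by decide) (by decide),
    phi_val (insert 1 ({0,2} : Finset (Fin 4))) 0 3 (by decide) (by decide),
    phi_val ({0,2} : Finset (Fin 4)) 1 2 (by decide) (by decide),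
    phi_val (insert 1 ({0,3} : Finset (Fin 4))) 1 3 (by decide) (by decide),
    phi_val ({0,3} : Finset (Fin 4)) 2 2 (by decide) (by decide),
    phi_val (insert 1 ({2,3} : Finset (Fin 4))) 1 3 (by decide) (by decide),
    phi_val ({2,3} : Finset (Fin 4)) 2 2 (by decide) (by decide),
    phi_val (insert 1 ({0,2,3} : Finset (Fin 4))) 0 4 (by decide) (by decide),
    phi_val ({0,2,3} : Finset (Fin 4)) 1 3 (by decide) (by decide)]
  norm_num [Nat.factorial, show (({0} : Finset (Fin 4))).card = 1 from by decide, show (({2} : Finset (Fin 4))).card = 1 from by decide, show (({3} : Finset (Fin 4))).card = 1 from by decide, show (({0,2} : Finset (Fin 4))).card = 2 from by decide, show (({0,3} : Finset (Fin 4))).card = 2 from by decide, show (({2,3} : Finset (Fin 4))).card = 2 from by decide, show (({0,2,3} : Finset (Fin 4))).card = 3 from by decide]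

lemma sv2 : Sv myκ v0 2 = (-23/192 : ℝ) := by
  rw [Sv, show ((Finset.univ.erase (2:Fin 4)).powerset : Finset (Finset (Fin 4))) = {∅, {0}, {1}, {3}, {0,1}, {0,3}, {1,3}, {0,1,3}} from by decide]
  rw [Finset.sum_insert (by decide), Finset.sum_insert (by decide), Finset.sum_insert (by decide), Finset.sum_insert (by decide), Finset.sum_insert (by decide), Finset.sum_insert (by decide), Finset.sum_insert (by decide), Finset.sum_singleton]
  rw [phi_val (insert 2 (∅ : Finset (Fin 4))) 2 1 (by decide) (by decide),
    phi_val (∅ : Finset (Fin 4)) 3 0 (by decide) (by decide),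
    phi_val (insert 2 ({0} : Finset (Fin 4))) 1 2 (by decide) (by decide),
    phi_val ({0} : Finset (Fin 4)) 2 1 (by decide) (by decide),
    phi_val (insert 2 ({1} : Finset (Fin 4))) 1 2 (by decide) (by decide),
    phi_val ({1} : Finset (Fin 4)) 2 1 (by decide) (by decide),
    phi_val (insert 2 ({3} : Finset (Fin 4))) 2 2 (by decide) (by decide),
    phi_val ({3} : Finset (Fin 4)) 3 1 (by decide) (by decide),
    phi_val (insert 2 ({0,1} : Finset (Fin 4))) 0 3 (by decide) (by decide),
    phi_val ({0,1} : Finset (Fin 4)) 1 2 (by decide) (by decide),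
    phi_val (insert 2 ({0,3} : Finset (Fin 4))) 1 3 (by decide) (by decide),
    phi_val ({0,3} : Finset (Fin 4)) 2 2 (by decide) (by decide),
    phi_val (insert 2 ({1,3} : Finset (Fin 4))) 1 3 (by decide) (by decide),
    phi_val ({1,3} : Finset (Fin 4)) 2 2 (by decide) (by decide),
    phi_val (insert 2 ({0,1,3} : Finset (Fin 4))) 0 4 (by decide) (by decide),
    phi_val ({0,1,3} : Finset (Fin 4)) 1 3 (by decide) (by decide)]
  norm_num [Nat.factorial, show (({0} : Finset (Fin 4))).card = 1 from by decide, show (({1} : Finset (Fin 4))).card = 1 from by decide, show (({3} : Finset (Fin 4))).card = 1 from by decide, show (({0,1} : Finset (Fin 4))).card = 2 from by decide, show (({0,3} : Finset (Fin 4))).card = 2 from by decide, show (({1,3} : Finset (Fin 4))).card = 2 from by decide, show (({0,1,3} : Finset (Fin 4))).card = 3 from by decide]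

lemma sv3 : Sv myκ v0 3 = (11/64 : ℝ) := by
  rw [Sv, show ((Finset.univ.erase (3:Fin 4)).powerset : Finset (Finset (Fin 4))) = {∅, {0}, {1}, {2}, {0,1}, {0,2}, {1,2}, {0,1,2}} from by decide]
  rw [Finset.sum_insert (by decide), Finset.sum_insert (by decide), Finset.sum_insert (by decide), Finset.sum_insert (by decide), Finset.sum_insert (by decide), Finset.sum_insert (by decide), Finset.sum_insert (by decide), Finset.sum_singleton]
  rw [phi_val (insert 3 (∅ : Finset (Fin 4))) 3 1 (by decide) (by decide),
    phi_val (∅ : Finset (Fin 4)) 3 0 (by decide) (by decide),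
    phi_val (insert 3 ({0} : Finset (Fin 4))) 2 2 (by decide) (by decide),
    phi_val ({0} : Finset (Fin 4)) 2 1 (by decide) (by decide),
    phi_val (insert 3 ({1} : Finset (Fin 4))) 2 2 (by decide) (by decide),
    phi_val ({1} : Finset (Fin 4)) 2 1 (by decide) (by decide),
    phi_val (insert 3 ({2} : Finset (Fin 4))) 2 2 (by decide) (by decide),
    phi_val ({2} : Finset (Fin 4)) 2 1 (by decide) (by decide),
    phi_val (insert 3 ({0,1} : Finset (Fin 4))) 1 3 (by decide) (by decide),
    phi_val ({0,1} : Finset (Fin 4)) 1 2 (by decide) (by decide),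
    phi_val (insert 3 ({0,2} : Finset (Fin 4))) 1 3 (by decide) (by decide),
    phi_val ({0,2} : Finset (Fin 4)) 1 2 (by decide) (by decide),
    phi_val (insert 3 ({1,2} : Finset (Fin 4))) 1 3 (by decide) (by decide),
    phi_val ({1,2} : Finset (Fin 4)) 1 2 (by decide) (by decide),
    phi_val (insert 3 ({0,1,2} : Finset (Fin 4))) 0 4 (by decide) (by decide),
    phi_val ({0,1,2} : Finset (Fin 4)) 0 3 (by decide) (by decide)]
  norm_num [Nat.factorial, show (({0} : Finset (Fin 4))).card = 1 from by decide, show (({1} : Finset (Fin 4))).card = 1 from by decide, show (({2} : Finset (Fin 4))).card = 1 from by decide, show (({0,1} : Finset (Fin 4))).card = 2 from by decide, show (({0,2} : Finset (Fin 4))).card = 2 from by decide, show (({1,2} : Finset (Fin 4))).card = 2 from by decide, show (({0,1,2} : Finset (Fin 4))).card = 3 from by decide]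

lemma irr3 : Irrelevant myκ v0 3 := by
  rintro ⟨X, ⟨hW, hmin⟩, h3⟩
  refine hmin (X.erase 3) (Finset.erase_ssubset h3) ?_
  intro x hx
  by_cases h : x 3 = true
  · show myκ x = myκ v0
    simp [myκ, v0, h]
  · have hx' : ∀ i ∈ X, x i = v0 i := by
      intro i hiX
      by_cases hi : i = 3
      · subst hi
        simpa [v0] using h
      · exact hx i (Finset.mem_erase.mpr ⟨hi, hiX⟩)
    exact hW x hx'


/-- Issue I5: some non-constant boolean classifier, point and feature are such that
the feature is irrelevant and yet it has strictly the largest Shapley value in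
absolute value among all features. -/
theorem issue_I5_occurs :
    ∃ (m : ℕ) (κ : (Fin m → Bool) → Bool) (v : Fin m → Bool) (i : Fin m),
      (∃ x y : Fin m → Bool, κ x ≠ κ y) ∧
      Irrelevant κ v i ∧ ∀ j : Fin m, j ≠ i → |Sv κ v j| < |Sv κ v i| := by
  refine ⟨4, myκ, v0, 3, ⟨![true, false, false, false], v0, by decide⟩, irr3, ?_⟩
  intro j hj
  fin_cases j
  · show |Sv myκ v0 0| < |Sv myκ v0 3|
    rw [sv0, sv3]
    rw [abs_of_nonpos (by norm_num), abs_of_nonneg (by norm_num)]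
    norm_num
  · show |Sv myκ v0 1| < |Sv myκ v0 3|
    rw [sv1, sv3]
    rw [abs_of_nonpos (by norm_num), abs_of_nonneg (by norm_num)]
    norm_num
  · show |Sv myκ v0 2| < |Sv myκ v0 3|
    rw [sv2, sv3]
    rw [abs_of_nonpos (by norm_num), abs_of_nonneg (by norm_num)]
    norm_num
  · exact absurd rfl hj
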